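/- Let a ≥ 3, let A be the sequence with A_0 = 0, A_1 = 1, A_{n+2} = a·A_{n+1} − A_n + 1, let n ≥ 2, and let j₂ be the integer with (j₂ − 1)/(A_{2n−1} + 1) < (A_{2n+1} − i)/A_{2n} ≤ j₂/(A_{2n−1} + 1) for i > (a+3)·A_{2n}/A_{2n−1}. Then j₂ ≤ A_{2n} − 4. -/
import Mathlib

lemma aux_mono (a : ℤ) (ha : 3 ≤ a) (A : ℕ → ℤ)
    (hA0 : A 0 = 0) (hA1 : A 1 = 1)
    (hrec : ∀ n : ℕ, A (n + 2) = a * A (n + 1) - A n + 1) :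
    ∀ k : ℕ, 0 ≤ A k ∧ A k < A (k + 1) := by
  intro k
  induction k with
  | zero => simp [hA0, hA1]
  | succ m ih =>
    obtain ⟨h0, h1⟩ := ih
    refine ⟨by omega, ?_⟩
    have := hrec m
    nlinarith [mul_le_mul_of_nonneg_right ha (by omega : (0:ℤ) ≤ A (m+1))]

lemma aux_ident (a : ℤ) (A : ℕ → ℤ)
    (hA0 : A 0 = 0) (hA1 : A 1 = 1)
    (hrec : ∀ n : ℕ, A (n + 2) = a * A (n + 1) - A n + 1) :
    ∀ k : ℕ, A (k + 2) * A k = A (k + 1) ^ 2 - A (k + 1) := by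
  intro k
  induction k with
  | zero => simp [hA0, hA1]
  | succ m ih =>
    have h1 := hrec m
    have h2 := hrec (m + 1)
    linear_combination A (m + 1) * h2 + ih - A (m + 2) * h1

/-- For `n ≥ 2`, if `j₂` is the integer with
`(j₂ - 1)/(A (2n-1) + 1) < (A (2n+1) - i)/A (2n) ≤ j₂/(A (2n-1) + 1)`
and `i > (a+3) A (2n) / A (2n-1)`, then `j₂ ≤ A (2n) - 4`. -/
theorem stmt6 (a : ℤ) (ha : 3 ≤ a) (A : ℕ → ℤ)
    (hA0 : A 0 = 0) (hA1 : A 1 = 1)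
    (hrec : ∀ n : ℕ, A (n + 2) = a * A (n + 1) - A n + 1) :
    ∀ (n : ℕ) (i : ℚ) (j₂ : ℤ), 2 ≤ n →
      ((a : ℚ) + 3) * (A (2 * n) : ℚ) / (A (2 * n - 1) : ℚ) < i →
      ((j₂ : ℚ) - 1) / ((A (2 * n - 1) : ℚ) + 1)
          < ((A (2 * n + 1) : ℚ) - i) / (A (2 * n) : ℚ) →
      ((A (2 * n + 1) : ℚ) - i) / (A (2 * n) : ℚ)
          ≤ (j₂ : ℚ) / ((A (2 * n - 1) : ℚ) + 1) →
      j₂ ≤ A (2 * n) - 4 := by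
  intro n i j₂ hn hi h1 _h2
  obtain ⟨m, rfl⟩ : ∃ m, n = m + 2 := ⟨n - 2, by omega⟩
  have e1 : 2 * (m + 2) - 1 = 2 * m + 3 := by omega
  have e2 : 2 * (m + 2) = 2 * m + 4 := by omega
  have e3 : 2 * (m + 2) + 1 = 2 * m + 5 := by omega
  have e4 : 2 * m + 4 - 1 = 2 * m + 3 := by omega
  simp only [e1, e2, e3, e4] at hi h1 ⊢
  -- integer facts
  have hmono := aux_mono a ha A hA0 hA1 hrec
  have hx1 : 1 ≤ A (2 * m + 2) := by
    obtain ⟨h0, h1'⟩ := hmono (2 * m + 1)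
    have e : A (2 * m + 1 + 1) = A (2 * m + 2) := congrArg A (by omega)
    omega
  have hxB : A (2 * m + 2) < A (2 * m + 3) := (hmono (2 * m + 2)).2
  have hBC : A (2 * m + 3) < A (2 * m + 4) := (hmono (2 * m + 3)).2
  have hDrec : A (2 * m + 5) = a * A (2 * m + 4) - A (2 * m + 3) + 1 := hrec (2 * m + 3)
  have hCrec : A (2 * m + 4) = a * A (2 * m + 3) - A (2 * m + 2) + 1 := hrec (2 * m + 2)
  have hid : A (2 * m + 4) * A (2 * m + 2)
      = A (2 * m + 3) ^ 2 - A (2 * m + 3) := aux_ident a A hA0 hA1 hrec (2 * m + 2)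
  -- rational versions
  set x : ℚ := (A (2 * m + 2) : ℚ) with hxdef
  set B : ℚ := (A (2 * m + 3) : ℚ) with hBdef
  set C : ℚ := (A (2 * m + 4) : ℚ) with hCdef
  set D : ℚ := (A (2 * m + 5) : ℚ) with hDdef
  have hxq : (1 : ℚ) ≤ x := by rw [hxdef]; exact_mod_cast hx1
  have hBq : x < B := by rw [hxdef, hBdef]; exact_mod_cast hxB
  have hCq : B < C := by rw [hBdef, hCdef]; exact_mod_cast hBC
  have hDq : D = (a : ℚ) * C - B + 1 := by
    rw [hDdef, hCdef, hBdef]; exact_mod_cast hDrec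
  have hCq' : C = (a : ℚ) * B - x + 1 := by
    rw [hCdef, hBdef, hxdef]; exact_mod_cast hCrec
  have hidq : C * x = B ^ 2 - B := by
    rw [hCdef, hxdef, hBdef]; exact_mod_cast hid
  have haq : (3 : ℚ) ≤ (a : ℚ) := by exact_mod_cast ha
  have hBpos : (0 : ℚ) < B := by linarith
  have hCpos : (0 : ℚ) < C := by linarith
  have hB1pos : (0 : ℚ) < B + 1 := by linarith
  rw [div_lt_div_iff₀ hB1pos hCpos] at h1
  rw [div_lt_iff₀ hBpos] at hi
  -- key inequality
  have key : ((j₂ : ℚ) - 1) * (B * C) < (C - 4) * (B * C) := by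
    have hid2 : C * x * B = (B ^ 2 - B) * B := by rw [hidq]
    have hC2 : C * (B * C) = ((a : ℚ) * B - x + 1) * (B * C) := by rw [← hCq']
    nlinarith [mul_lt_mul_of_pos_right h1 hBpos,
      mul_lt_mul_of_pos_right hi hB1pos, hid2, hC2, hDq,
      mul_nonneg (by linarith : (0:ℚ) ≤ (a:ℚ) + 3) hCpos.le,
      mul_nonneg (by linarith : (0:ℚ) ≤ B - 1) hBpos.le]
  have key2 : (j₂ : ℚ) - 1 < C - 4 :=
    lt_of_mul_lt_mul_right key (by positivity)
  have : (j₂ : ℚ) < ((A (2 * m + 4) - 3 : ℤ) : ℚ) := by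
    push_cast
    rw [← hCdef]
    linarith
  have hlt : j₂ < A (2 * m + 4) - 3 := by exact_mod_cast this
  omega
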